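/- arXiv:1803.05414 — 2 statements merged into one kernel-verified Lean document; each statement's English description precedes it below -/
import Mathlib

section
/- For any graph G, the closed linearity and open linearity satisfy lin(G) - 1 ≤ lin°(G) ≤ 2·lin(G). -/
def IsIntervalOf {V : Type*} {n : ℕ} (σ : V ≃ Fin n) (I : Set V) : Prop :=
  ∃ a b : Fin n, I = {v | a ≤ σ v ∧ σ v ≤ b}

def closedNbhd {V : Type*} (G : SimpleGraph V) (x : V) : Set V := {y | G.Adj x y ∨ y = x}

def HasClosedLineModel {V : Type*} [Fintype V] (G : SimpleGraph V) (p : ℕ) : Prop :=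
  ∃ σ : Fin p → (V ≃ Fin (Fintype.card V)),
    ∀ x : V, ∃ I : Fin p → Set V,
      (∀ i, IsIntervalOf (σ i) (I i)) ∧ (⋃ i, I i) = closedNbhd G x

def HasOpenLineModel {V : Type*} [Fintype V] (G : SimpleGraph V) (p : ℕ) : Prop :=
  ∃ σ : Fin p → (V ≃ Fin (Fintype.card V)),
    ∀ x : V, ∃ I : Fin p → Set V,
      (∀ i, IsIntervalOf (σ i) (I i)) ∧ (⋃ i, I i) = G.neighborSet x

noncomputable def linCl {V : Type*} [Fintype V] (G : SimpleGraph V) : ℕ :=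
  sInf {p | HasClosedLineModel G p}

noncomputable def linOp {V : Type*} [Fintype V] (G : SimpleGraph V) : ℕ :=
  sInf {p | HasOpenLineModel G p}

def HasContigModel {V : Type*} [Fintype V] (G : SimpleGraph V) (k : ℕ) : Prop :=
  ∃ σ : V ≃ Fin (Fintype.card V),
    ∀ x : V, ∃ I : Fin k → Set V,
      (∀ i, IsIntervalOf σ (I i)) ∧ (⋃ i, I i) = closedNbhd G x

noncomputable def contCl {V : Type*} [Fintype V] (G : SimpleGraph V) : ℕ :=
  sInf {k | HasContigModel G k}

section Aux

variable {V : Type*} {n : ℕ}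

lemma empty_int (σ : V ≃ Fin n) (hn : 2 ≤ n) : IsIntervalOf σ ∅ := by
  refine ⟨⟨1, by omega⟩, ⟨0, by omega⟩, ?_⟩
  ext v
  simp only [Set.mem_empty_iff_false, Set.mem_setOf_eq, false_iff, not_and, Fin.le_def]
  omega

lemma single_int (σ : V ≃ Fin n) (x : V) : IsIntervalOf σ {x} := by
  refine ⟨σ x, σ x, ?_⟩
  ext v
  simp only [Set.mem_singleton_iff, Set.mem_setOf_eq]
  constructor
  · rintro rfl; exact ⟨le_refl _, le_refl _⟩
  · rintro ⟨h1, h2⟩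
    exact σ.injective (le_antisymm h2 h1)

lemma interval_lt (σ : V ≃ Fin n) (hn : 2 ≤ n) {I : Set V} (h : IsIntervalOf σ I)
    (c : Fin n) : IsIntervalOf σ (I ∩ {v | σ v < c}) := by
  obtain ⟨a, b, rfl⟩ := h
  by_cases hc : c.val = 0
  · have : ({v | a ≤ σ v ∧ σ v ≤ b} ∩ {v | σ v < c}) = ∅ := by
      ext v
      simp only [Set.mem_inter_iff, Set.mem_setOf_eq, Set.mem_empty_iff_false, iff_false]
      rintro ⟨-, h2⟩
      rw [Fin.lt_def] at h2; omega
    rw [this]; exact empty_int σ hn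
  · refine ⟨a, min b ⟨c.val - 1, by omega⟩, ?_⟩
    ext v
    simp only [Set.mem_inter_iff, Set.mem_setOf_eq, le_min_iff, Fin.lt_def, Fin.le_def]
    omega

lemma interval_gt (σ : V ≃ Fin n) (hn : 2 ≤ n) {I : Set V} (h : IsIntervalOf σ I)
    (c : Fin n) : IsIntervalOf σ (I ∩ {v | c < σ v}) := by
  obtain ⟨a, b, rfl⟩ := h
  by_cases hc : c.val + 1 = n
  · have : ({v | a ≤ σ v ∧ σ v ≤ b} ∩ {v | c < σ v}) = ∅ := by
      ext v
      simp only [Set.mem_inter_iff, Set.mem_setOf_eq, Set.mem_empty_iff_false, iff_false]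
      rintro ⟨-, h2⟩
      rw [Fin.lt_def] at h2
      have := (σ v).isLt
      omega
    rw [this]; exact empty_int σ hn
  · refine ⟨max a ⟨c.val + 1, by have := c.isLt; omega⟩, b, ?_⟩
    ext v
    simp only [Set.mem_inter_iff, Set.mem_setOf_eq, max_le_iff, Fin.lt_def, Fin.le_def]
    omega

variable [Fintype V]

lemma openToClosed (G : SimpleGraph V) {q : ℕ} (h : HasOpenLineModel G q) :
    HasClosedLineModel G (q + 1) := by
  obtain ⟨σ, hσ⟩ := h
  classical
  refine ⟨fun i => if hi : i.val < q then σ ⟨i, hi⟩ else Fintype.equivFin V, fun x => ?_⟩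
  obtain ⟨I, hI, hU⟩ := hσ x
  refine ⟨fun i => if hi : i.val < q then I ⟨i, hi⟩ else {x}, fun i => ?_, ?_⟩
  · by_cases hi : i.val < q
    · simpa [hi] using hI ⟨i, hi⟩
    · simpa [hi] using single_int (Fintype.equivFin V) x
  · ext v
    simp only [Set.mem_iUnion, closedNbhd, Set.mem_setOf_eq]
    have hadj : G.Adj x v ↔ ∃ j : Fin q, v ∈ I j := by
      rw [← SimpleGraph.mem_neighborSet, ← hU]; simp
    constructor
    · rintro ⟨i, hv⟩
      by_cases hi : i.val < q
      · rw [dif_pos hi] at hv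
        exact Or.inl (hadj.mpr ⟨⟨i, hi⟩, hv⟩)
      · rw [dif_neg hi] at hv
        exact Or.inr hv
    · rintro (hv | rfl)
      · obtain ⟨j, hj⟩ := hadj.mp hv
        refine ⟨⟨j.val, by omega⟩, ?_⟩
        rw [dif_pos j.isLt]
        exact hj
      · exact ⟨⟨q, by omega⟩, by simp⟩

lemma closedToOpen (G : SimpleGraph V) (hn : 2 ≤ Fintype.card V) {p : ℕ}
    (h : HasClosedLineModel G p) : HasOpenLineModel G (2 * p) := by
  obtain ⟨σ, hσ⟩ := h
  rcases Nat.eq_zero_or_pos p with rfl | hp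
  · exfalso
    obtain ⟨x⟩ : Nonempty V := Fintype.card_pos_iff.mp (by omega)
    obtain ⟨I, hI, hU⟩ := hσ x
    have hx : x ∈ (⋃ i : Fin 0, I i) := hU ▸ (Or.inr rfl : x ∈ closedNbhd G x)
    simp at hx
  · classical
    set d : Fin (2 * p) → Fin p := fun i => ⟨i.val % p, Nat.mod_lt _ hp⟩ with hd
    refine ⟨fun i => σ (d i), fun x => ?_⟩
    obtain ⟨I, hI, hU⟩ := hσ x
    refine ⟨fun i => if i.val < p then I (d i) ∩ {v | σ (d i) v < σ (d i) x}
                     else I (d i) ∩ {v | σ (d i) x < σ (d i) v}, fun i => ?_, ?_⟩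
    · by_cases hi : i.val < p
      · simpa [hi] using interval_lt (σ (d i)) hn (hI (d i)) (σ (d i) x)
      · simpa [hi] using interval_gt (σ (d i)) hn (hI (d i)) (σ (d i) x)
    · ext v
      simp only [Set.mem_iUnion, SimpleGraph.mem_neighborSet]
      have hcl : ∀ w, w ∈ closedNbhd G x ↔ ∃ j : Fin p, w ∈ I j := by
        intro w; rw [← hU]; simp
      constructor
      · rintro ⟨i, hv⟩
        by_cases hi : i.val < p <;> [rw [if_pos hi] at hv; rw [if_neg hi] at hv] <;>
        · obtain ⟨hv1, hv2⟩ := hv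
          have hmem : v ∈ closedNbhd G x := (hcl v).mpr ⟨d i, hv1⟩
          have hne : v ≠ x := by
            rintro rfl
            simp only [Set.mem_setOf_eq] at hv2
            exact lt_irrefl _ hv2
          rcases hmem with hadj | rfl
          · exact hadj
          · exact absurd rfl hne
      · intro hadj
        obtain ⟨j, hj⟩ := (hcl v).mp (Or.inl hadj)
        have hne : σ j v ≠ σ j x := fun hh => G.ne_of_adj hadj ((σ j).injective hh).symm
        rcases lt_or_gt_of_ne hne with hlt | hgt
        · refine ⟨⟨j.val, by omega⟩, ?_⟩
          have hdj : d ⟨j.val, by omega⟩ = j := by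
            simp [hd, Fin.ext_iff, Nat.mod_eq_of_lt j.isLt]
          rw [if_pos (by simpa using j.isLt), hdj]
          exact ⟨hj, hlt⟩
        · refine ⟨⟨j.val + p, by omega⟩, ?_⟩
          have hdj : d ⟨j.val + p, by omega⟩ = j := by
            simp [hd, Fin.ext_iff, Nat.mod_eq_of_lt j.isLt]
          rw [if_neg (by simp), hdj]
          exact ⟨hj, hgt⟩

lemma openNonempty (G : SimpleGraph V) : ∃ q, HasOpenLineModel G q := by
  classical
  rcases le_or_gt 2 (Fintype.card V) with hn | hn
  · refine ⟨Fintype.card V, fun _ => Fintype.equivFin V, fun x => ?_⟩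
    set e := Fintype.equivFin V with he
    refine ⟨fun i => if e.symm i ∈ G.neighborSet x then {e.symm i} else ∅, fun i => ?_, ?_⟩
    · by_cases hi : e.symm i ∈ G.neighborSet x
      · simpa [hi] using single_int e (e.symm i)
      · simpa [hi] using empty_int e hn
    · ext v
      simp only [Set.mem_iUnion]
      constructor
      · rintro ⟨i, hv⟩
        by_cases hi : e.symm i ∈ G.neighborSet x
        · rw [if_pos hi] at hv
          rwa [Set.mem_singleton_iff.mp hv]
        · rw [if_neg hi] at hv
          exact absurd hv (Set.notMem_empty v)
      · intro hv
        exact ⟨e v, by simp [hv]⟩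
  · have hsub : Subsingleton V := Fintype.card_le_one_iff_subsingleton.mp (by omega)
    refine ⟨0, fun i => i.elim0, fun x => ⟨fun _ => ∅, fun i => i.elim0, ?_⟩⟩
    ext v
    simp only [Set.iUnion_of_empty, Set.mem_empty_iff_false, SimpleGraph.mem_neighborSet,
      false_iff]
    intro h
    exact G.irrefl (Subsingleton.elim x v ▸ h)

lemma closedNonempty (G : SimpleGraph V) (hn : 2 ≤ Fintype.card V) :
    ∃ p, HasClosedLineModel G p := by
  classical
  refine ⟨Fintype.card V, fun _ => Fintype.equivFin V, fun x => ?_⟩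
  set e := Fintype.equivFin V with he
  refine ⟨fun i => if e.symm i ∈ closedNbhd G x then {e.symm i} else ∅, fun i => ?_, ?_⟩
  · by_cases hi : e.symm i ∈ closedNbhd G x
    · simpa [hi] using single_int e (e.symm i)
    · simpa [hi] using empty_int e hn
  · ext v
    simp only [Set.mem_iUnion]
    constructor
    · rintro ⟨i, hv⟩
      by_cases hi : e.symm i ∈ closedNbhd G x
      · rw [if_pos hi] at hv
        rwa [Set.mem_singleton_iff.mp hv]
      · rw [if_neg hi] at hv
        exact absurd hv (Set.notMem_empty v)
    · intro hv
      exact ⟨e v, by simp [hv]⟩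

end Aux

theorem lin_open_closed {V : Type*} [Fintype V] (G : SimpleGraph V) :
    linCl G - 1 ≤ linOp G ∧ linOp G ≤ 2 * linCl G := by
  constructor
  · rw [Nat.sub_le_iff_le_add]
    have hmem : linOp G ∈ {p | HasOpenLineModel G p} := Nat.sInf_mem (openNonempty G)
    exact Nat.sInf_le (openToClosed G hmem)
  · by_cases hE : ∃ x y, G.Adj x y
    · obtain ⟨x, y, hxy⟩ := hE
      have hn : 2 ≤ Fintype.card V := Fintype.one_lt_card_iff.mpr ⟨x, y, G.ne_of_adj hxy⟩
      have hmem : linCl G ∈ {p | HasClosedLineModel G p} := Nat.sInf_mem (closedNonempty G hn)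
      exact Nat.sInf_le (closedToOpen G hn hmem)
    · have h0 : HasOpenLineModel G 0 := by
        refine ⟨fun i => i.elim0, fun x => ⟨fun _ => ∅, fun i => i.elim0, ?_⟩⟩
        ext v
        simp only [Set.iUnion_of_empty, Set.mem_empty_iff_false, SimpleGraph.mem_neighborSet,
          false_iff]
        exact fun h => hE ⟨x, v, h⟩
      have hle : linOp G ≤ 0 := Nat.sInf_le (show 0 ∈ {p | HasOpenLineModel G p} from h0)
      omega
end

section
/- The closed linearity of the disjoint union of a finite collection of graphs equals the maximum of the closed linearities of the graphs in the collection (for a nonempty collection of nonempty graphs). -/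
def sigmaGraph {ι : Type*} {V : ι → Type*} (G : ∀ i, SimpleGraph (V i)) :
    SimpleGraph (Σ i, V i) where
  Adj x y := ∃ (i : ι) (a b : V i), x = ⟨i, a⟩ ∧ y = ⟨i, b⟩ ∧ (G i).Adj a b
  symm := by constructor; rintro x y ⟨i, a, b, rfl, rfl, h⟩; exact ⟨i, b, a, rfl, rfl, h.symm⟩
  loopless := by
    constructor
    rintro x ⟨i, a, b, rfl, h2, h⟩
    simp only [Sigma.mk.inj_iff, heq_eq_eq, true_and] at h2
    subst h2
    exact (G i).irrefl h

section Aux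

open Finset

/-- block offset function -/
def offAux {m : ℕ} (n : Fin m → ℕ) (k : Fin m) : ℕ :=
  ∑ j ∈ Finset.univ.filter (fun j => j < k), n j

lemma offAux_add_eq {m : ℕ} (n : Fin m → ℕ) (k : Fin m) :
    offAux n k + n k = ∑ j ∈ Finset.univ.filter (fun j => j ≤ k), n j := by
  have h : Finset.univ.filter (fun j => j ≤ k) = insert k (Finset.univ.filter (fun j => j < k)) := by
    ext j
    simp [le_iff_lt_or_eq, or_comm]
  rw [h, Finset.sum_insert (by simp), offAux, Nat.add_comm]

lemma offAux_add_le {m : ℕ} (n : Fin m → ℕ) {k k' : Fin m} (h : k < k') :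
    offAux n k + n k ≤ offAux n k' := by
  rw [offAux_add_eq]
  apply Finset.sum_le_sum_of_subset
  intro j hj
  simp only [Finset.mem_filter, Finset.mem_univ, true_and] at hj ⊢
  exact lt_of_le_of_lt hj h

lemma offAux_add_le_sum {m : ℕ} (n : Fin m → ℕ) (k : Fin m) :
    offAux n k + n k ≤ ∑ j, n j := by
  rw [offAux_add_eq]
  apply Finset.sum_le_sum_of_subset
  intro j _
  exact Finset.mem_univ j

lemma sandwichAux {m : ℕ} (n : Fin m → ℕ) (k k' : Fin m) (a b v : ℕ)
    (hv : v < n k') (ha : a < n k) (hb : b < n k) :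
    (offAux n k + a ≤ offAux n k' + v ∧ offAux n k' + v ≤ offAux n k + b) ↔
      (k' = k ∧ a ≤ v ∧ v ≤ b) := by
  constructor
  · rintro ⟨h1, h2⟩
    rcases lt_trichotomy k' k with h | h | h
    · have := offAux_add_le n h
      omega
    · subst h; omega
    · have := offAux_add_le n h
      omega
  · rintro ⟨rfl, h1, h2⟩
    omega

lemma not_hasClosedLineModel_zero {W : Type*} [Fintype W] [Nonempty W] (H : SimpleGraph W) :
    ¬ HasClosedLineModel H 0 := by
  rintro ⟨σ, hσ⟩
  obtain ⟨x⟩ := ‹Nonempty W›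
  obtain ⟨I, _, hU⟩ := hσ x
  have hx : x ∈ closedNbhd H x := Or.inr rfl
  rw [← hU] at hx
  simp at hx

lemma hasClosedLineModel_card {W : Type*} [Fintype W] (H : SimpleGraph W) :
    HasClosedLineModel H (Fintype.card W) := by
  classical
  obtain e := Fintype.equivFin W
  refine ⟨fun _ => e, fun x => ?_⟩
  refine ⟨fun i => if e.symm i ∈ closedNbhd H x then {v | i ≤ e v ∧ e v ≤ i}
    else {v | e x ≤ e v ∧ e v ≤ e x}, ?_, ?_⟩
  · intro i
    unfold IsIntervalOf
    dsimp only
    split_ifs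
    · exact ⟨i, i, rfl⟩
    · exact ⟨e x, e x, rfl⟩
  · have hsingle : ∀ c : Fin (Fintype.card W), {v | c ≤ e v ∧ e v ≤ c} = {e.symm c} := by
      intro c
      ext v
      constructor
      · rintro ⟨h1, h2⟩
        have : e v = c := le_antisymm h2 h1
        simp [← this]
      · rintro rfl
        simp
    apply subset_antisymm
    · apply Set.iUnion_subset
      intro i
      split_ifs with h
      · rw [hsingle]
        intro v hv
        simp only [Set.mem_singleton_iff] at hv
        subst hv
        exact h
      · rw [hsingle]
        intro v hv
        simp only [Set.mem_singleton_iff, Equiv.symm_apply_apply] at hv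
        subst hv
        exact Or.inr rfl
    · intro y hy
      apply Set.mem_iUnion.2
      refine ⟨e y, ?_⟩
      have : e.symm (e y) ∈ closedNbhd H x := by simpa using hy
      rw [if_pos this, hsingle]
      simp

lemma linCl_pos {W : Type*} [Fintype W] [Nonempty W] (H : SimpleGraph W) : 0 < linCl H := by
  rcases Nat.eq_zero_or_pos (linCl H) with h | h
  · exfalso
    have hne : {p | HasClosedLineModel H p}.Nonempty := ⟨_, hasClosedLineModel_card H⟩
    have hmem := Nat.sInf_mem hne
    rw [show sInf {p | HasClosedLineModel H p} = linCl H from rfl, h] at hmem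
    exact not_hasClosedLineModel_zero H hmem
  · exact h

lemma hasClosedLineModel_mono {W : Type*} [Fintype W] (H : SimpleGraph W) {p q : ℕ}
    (hp : 0 < p) (hpq : p ≤ q) (h : HasClosedLineModel H p) : HasClosedLineModel H q := by
  obtain ⟨σ, hσ⟩ := h
  set r : Fin q → Fin p := fun j => if h : (j : ℕ) < p then ⟨j, h⟩ else ⟨0, hp⟩ with hr
  refine ⟨fun j => σ (r j), fun x => ?_⟩
  obtain ⟨I, hI, hU⟩ := hσ x
  refine ⟨fun j => I (r j), fun j => hI (r j), ?_⟩
  rw [← hU]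
  apply subset_antisymm
  · exact Set.iUnion_subset fun j => Set.subset_iUnion I (r j)
  · intro y hy
    obtain ⟨i, hi⟩ := Set.mem_iUnion.1 hy
    apply Set.mem_iUnion.2
    refine ⟨⟨i, lt_of_lt_of_le i.isLt hpq⟩, ?_⟩
    have hri : r ⟨(i : ℕ), lt_of_lt_of_le i.isLt hpq⟩ = i := by
      simp [hr, i.isLt]
    rw [hri]
    exact hi

lemma closedNbhd_sigmaGraph {ι : Type*} {V : ι → Type*} (G : ∀ i, SimpleGraph (V i))
    (i : ι) (x : V i) :
    closedNbhd (sigmaGraph G) ⟨i, x⟩ = Sigma.mk i '' closedNbhd (G i) x := by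
  ext ⟨i', y⟩
  constructor
  · rintro (⟨i0, a, b, ha, hb, hadj⟩ | h)
    · obtain ⟨rfl, ha2⟩ := Sigma.mk.inj_iff.1 ha
      obtain ⟨rfl, hb2⟩ := Sigma.mk.inj_iff.1 hb
      rw [← eq_of_heq ha2, ← eq_of_heq hb2] at hadj
      exact ⟨y, Or.inl hadj, rfl⟩
    · obtain ⟨rfl, h2⟩ := Sigma.mk.inj_iff.1 h
      exact ⟨y, Or.inr (eq_of_heq h2), rfl⟩
  · rintro ⟨y0, h | h, heq⟩
    · exact Or.inl ⟨i, x, y0, rfl, heq.symm, h⟩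
    · subst h
      exact Or.inr heq.symm

noncomputable def restrEquiv {U : Type*} [Fintype U] {n : ℕ} (f : U → Fin n)
    (hf : Function.Injective f) : U ≃ Fin (Fintype.card U) :=
  Equiv.ofBijective
    (fun u => ((Finset.univ.image f).orderIsoOfFin
        (by rw [Finset.card_image_of_injective _ hf, Finset.card_univ])).symm
      ⟨f u, Finset.mem_image_of_mem f (Finset.mem_univ u)⟩)
    (by
      rw [Fintype.bijective_iff_injective_and_card, Fintype.card_fin]
      refine ⟨fun u v h => ?_, rfl⟩
      have := (((Finset.univ.image f).orderIsoOfFin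
        (by rw [Finset.card_image_of_injective _ hf, Finset.card_univ])).symm).injective h
      exact hf (Subtype.ext_iff.1 this))

lemma restrEquiv_le_iff {U : Type*} [Fintype U] {n : ℕ} (f : U → Fin n)
    (hf : Function.Injective f) (u u' : U) :
    restrEquiv f hf u ≤ restrEquiv f hf u' ↔ f u ≤ f u' := by
  show (_ : Fin _) ≤ _ ↔ _
  rw [show restrEquiv f hf u = ((Finset.univ.image f).orderIsoOfFin
      (by rw [Finset.card_image_of_injective _ hf, Finset.card_univ])).symm
      ⟨f u, Finset.mem_image_of_mem f (Finset.mem_univ u)⟩ from rfl,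
    show restrEquiv f hf u' = ((Finset.univ.image f).orderIsoOfFin
      (by rw [Finset.card_image_of_injective _ hf, Finset.card_univ])).symm
      ⟨f u', Finset.mem_image_of_mem f (Finset.mem_univ u')⟩ from rfl]
  rw [OrderIso.le_iff_le]
  rfl

lemma restrict_interval {U : Type*} [Fintype U] {n : ℕ} (f : U → Fin n)
    (hf : Function.Injective f) (a b : Fin n)
    (hne : {u | a ≤ f u ∧ f u ≤ b}.Nonempty) :
    ∃ a' b' : Fin (Fintype.card U),
      {u | a ≤ f u ∧ f u ≤ b} = {u | a' ≤ restrEquiv f hf u ∧ restrEquiv f hf u ≤ b'} := by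
  classical
  set τ := restrEquiv f hf with hτ
  set T : Finset U := Finset.univ.filter (fun u => a ≤ f u ∧ f u ≤ b) with hT
  have hTne : T.Nonempty := by
    obtain ⟨u, hu⟩ := hne
    exact ⟨u, by simp [hT, hu.1, hu.2]⟩
  have hT'ne : (T.image τ).Nonempty := hTne.image τ
  refine ⟨(T.image τ).min' hT'ne, (T.image τ).max' hT'ne, ?_⟩
  ext u
  constructor
  · intro hu
    have huT : u ∈ T := by simp [hT, hu.1, hu.2]
    exact ⟨Finset.min'_le _ _ (Finset.mem_image_of_mem τ huT),
      Finset.le_max' _ _ (Finset.mem_image_of_mem τ huT)⟩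
  · rintro ⟨h1, h2⟩
    obtain ⟨u1, hu1, hτ1⟩ := Finset.mem_image.1 ((T.image τ).min'_mem hT'ne)
    obtain ⟨u2, hu2, hτ2⟩ := Finset.mem_image.1 ((T.image τ).max'_mem hT'ne)
    simp only [hT, Finset.mem_filter, Finset.mem_univ, true_and] at hu1 hu2
    have l1 : f u1 ≤ f u := (restrEquiv_le_iff f hf u1 u).1 (hτ1 ▸ h1)
    have l2 : f u ≤ f u2 := (restrEquiv_le_iff f hf u u2).1 (hτ2 ▸ h2)
    exact ⟨le_trans hu1.1 l1, le_trans l2 hu2.2⟩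

lemma hasModel_component {ι : Type*} [Fintype ι] {V : ι → Type*} [∀ i, Fintype (V i)]
    (G : ∀ i, SimpleGraph (V i)) (i : ι) {p : ℕ}
    (h : HasClosedLineModel (sigmaGraph G) p) : HasClosedLineModel (G i) p := by
  classical
  obtain ⟨σ, hσ⟩ := h
  set f : Fin p → V i → Fin (Fintype.card (Σ i, V i)) := fun j v => σ j ⟨i, v⟩ with hfdef
  have hfinj : ∀ j, Function.Injective (f j) := by
    intro j v w hvw
    have h2 := (σ j).injective hvw
    exact sigma_mk_injective h2
  refine ⟨fun j => restrEquiv (f j) (hfinj j), fun x => ?_⟩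
  obtain ⟨I, hI, hU⟩ := hσ ⟨i, x⟩
  have hN := closedNbhd_sigmaGraph G i x
  have key : ∀ j : Fin p, ∃ I' : Set (V i),
      IsIntervalOf (restrEquiv (f j) (hfinj j)) I' ∧
      I' ⊆ closedNbhd (G i) x ∧ ∀ v : V i, (⟨i, v⟩ : Σ i, V i) ∈ I j → v ∈ I' := by
    intro j
    obtain ⟨a, b, hab⟩ := hI j
    by_cases hne : {v : V i | a ≤ f j v ∧ f j v ≤ b}.Nonempty
    · obtain ⟨a', b', h'⟩ := restrict_interval (f j) (hfinj j) a b hne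
      refine ⟨{v | a ≤ f j v ∧ f j v ≤ b}, ⟨a', b', h'⟩, ?_, ?_⟩
      · intro v hv
        have hv2 : (⟨i, v⟩ : Σ i, V i) ∈ closedNbhd (sigmaGraph G) ⟨i, x⟩ := by
          rw [← hU]
          exact Set.mem_iUnion.2 ⟨j, by rw [hab]; exact hv⟩
        rw [hN] at hv2
        obtain ⟨w, hw, hweq⟩ := hv2
        rwa [sigma_mk_injective hweq] at hw
      · intro v hv
        rw [hab] at hv
        exact hv
    · refine ⟨{v | restrEquiv (f j) (hfinj j) x ≤ restrEquiv (f j) (hfinj j) v ∧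
          restrEquiv (f j) (hfinj j) v ≤ restrEquiv (f j) (hfinj j) x},
        ⟨_, _, rfl⟩, ?_, ?_⟩
      · intro v hv
        have h2 : restrEquiv (f j) (hfinj j) v = restrEquiv (f j) (hfinj j) x :=
          le_antisymm hv.2 hv.1
        have h3 : v = x := (restrEquiv (f j) (hfinj j)).injective h2
        subst h3
        exact Or.inr rfl
      · intro v hv
        rw [hab] at hv
        exact absurd ⟨v, hv⟩ hne
  choose I' hInt hSub hCov using key
  refine ⟨I', hInt, ?_⟩
  apply subset_antisymm
  · exact Set.iUnion_subset hSub
  · intro y hy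
    have hy2 : (⟨i, y⟩ : Σ _, _) ∈ closedNbhd (sigmaGraph G) ⟨i, x⟩ := by
      rw [hN]; exact ⟨y, hy, rfl⟩
    rw [← hU] at hy2
    obtain ⟨j, hj⟩ := Set.mem_iUnion.1 hy2
    exact Set.mem_iUnion.2 ⟨j, hCov j y hj⟩

lemma hasModel_sigma {ι : Type*} [Fintype ι] {V : ι → Type*} [∀ i, Fintype (V i)]
    (G : ∀ i, SimpleGraph (V i)) {p : ℕ}
    (h : ∀ i, HasClosedLineModel (G i) p) : HasClosedLineModel (sigmaGraph G) p := by
  classical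
  set m := Fintype.card ι with hm
  set e : ι ≃ Fin m := Fintype.equivFin ι with he
  set n : Fin m → ℕ := fun k => Fintype.card (V (e.symm k)) with hn
  have hni : ∀ i, Fintype.card (V i) = n (e i) := by
    intro i; simp [hn]
  choose σ hσ using h
  have hcardN : Fintype.card (Σ i, V i) = ∑ k, n k := by
    rw [Fintype.card_sigma]
    exact Fintype.sum_equiv e _ _ (fun i => hni i)
  set g : Fin p → (Σ i, V i) → ℕ := fun j y => offAux n (e y.1) + ((σ y.1 j) y.2 : ℕ) with hg
  have hglt : ∀ j y, g j y < Fintype.card (Σ i, V i) := by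
    intro j y
    rw [hcardN]
    show offAux n (e y.1) + ((σ y.1 j) y.2 : ℕ) < _
    have h1 : ((σ y.1 j) y.2 : ℕ) < n (e y.1) := by
      rw [← hni y.1]; exact ((σ y.1 j) y.2).isLt
    have h2 := offAux_add_le_sum n (e y.1)
    omega
  have hval : ∀ j (y : Σ i, V i), ((σ y.1 j) y.2 : ℕ) < n (e y.1) := by
    intro j y
    rw [← hni y.1]; exact ((σ y.1 j) y.2).isLt
  set Glob : Fin p → (Σ i, V i) ≃ Fin (Fintype.card (Σ i, V i)) := fun j =>
    Equiv.ofBijective (fun y => ⟨g j y, hglt j y⟩)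
      (by
        rw [Fintype.bijective_iff_injective_and_card, Fintype.card_fin]
        refine ⟨?_, rfl⟩
        rintro ⟨i1, v1⟩ ⟨i2, v2⟩ hy
        have heqn : g j ⟨i1, v1⟩ = g j ⟨i2, v2⟩ := by
          simpa using congrArg Fin.val hy
        simp only [hg] at heqn
        have hs := (sandwichAux n (e i2) (e i1) ((σ i2 j) v2 : ℕ) ((σ i2 j) v2 : ℕ)
          ((σ i1 j) v1 : ℕ) (hval j ⟨i1, v1⟩) (hval j ⟨i2, v2⟩) (hval j ⟨i2, v2⟩)).1
          ⟨le_of_eq heqn.symm, le_of_eq heqn⟩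
        obtain ⟨hee, h1, h2⟩ := hs
        have hii : i1 = i2 := e.injective hee
        subst hii
        have : (σ i1 j) v1 = (σ i1 j) v2 := Fin.ext (le_antisymm h2 h1)
        rw [(σ i1 j).injective this]) with hGlob
  refine ⟨Glob, ?_⟩
  rintro ⟨i, x⟩
  obtain ⟨I, hI, hU⟩ := hσ i x
  choose a b hab using hI
  have haval : ∀ j, ((a j : ℕ)) < n (e i) := fun j => by rw [← hni i]; exact (a j).isLt
  have hbval : ∀ j, ((b j : ℕ)) < n (e i) := fun j => by rw [← hni i]; exact (b j).isLt
  set A : Fin p → Fin (Fintype.card (Σ i, V i)) := fun j =>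
    ⟨offAux n (e i) + (a j : ℕ), by
      have := offAux_add_le_sum n (e i)
      rw [hcardN]
      have := haval j
      omega⟩ with hA
  set B : Fin p → Fin (Fintype.card (Σ i, V i)) := fun j =>
    ⟨offAux n (e i) + (b j : ℕ), by
      have := offAux_add_le_sum n (e i)
      rw [hcardN]
      have := hbval j
      omega⟩ with hB
  refine ⟨fun j => {y | A j ≤ Glob j y ∧ Glob j y ≤ B j}, fun j => ⟨A j, B j, rfl⟩, ?_⟩
  have hJ : ∀ j, {y | A j ≤ Glob j y ∧ Glob j y ≤ B j} = Sigma.mk i '' I j := by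
    intro j
    ext ⟨i', v⟩
    have hGval : ((Glob j ⟨i', v⟩ : Fin _) : ℕ) = offAux n (e i') + ((σ i' j) v : ℕ) := rfl
    constructor
    · rintro ⟨h1, h2⟩
      rw [Fin.le_def] at h1 h2
      rw [hGval] at h1 h2
      have hs := (sandwichAux n (e i) (e i') ((a j : ℕ)) ((b j : ℕ)) ((σ i' j) v : ℕ)
        (hval j ⟨i', v⟩) (haval j) (hbval j)).1 ⟨h1, h2⟩
      obtain ⟨hee, hle1, hle2⟩ := hs
      have hii : i' = i := e.injective hee
      subst hii
      refine ⟨v, ?_, rfl⟩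
      rw [hab j]
      exact ⟨hle1, hle2⟩
    · rintro ⟨w, hw, hweq⟩
      obtain ⟨rfl, h2⟩ := Sigma.mk.inj_iff.1 hweq
      rw [eq_of_heq h2] at hw
      rw [hab j] at hw
      constructor
      · rw [Fin.le_def]; rw [hGval]
        exact Nat.add_le_add_left hw.1 _
      · rw [Fin.le_def]; rw [hGval]
        exact Nat.add_le_add_left hw.2 _
  calc (⋃ j, {y | A j ≤ Glob j y ∧ Glob j y ≤ B j}) = ⋃ j, Sigma.mk i '' I j := by
        exact Set.iUnion_congr hJ
    _ = Sigma.mk i '' ⋃ j, I j := (Set.image_iUnion).symm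
    _ = Sigma.mk i '' closedNbhd (G i) x := by rw [hU]
    _ = closedNbhd (sigmaGraph G) ⟨i, x⟩ := (closedNbhd_sigmaGraph G i x).symm

end Aux

theorem linCl_sigmaGraph {ι : Type*} [Fintype ι] [Nonempty ι] {V : ι → Type*}
    [∀ i, Fintype (V i)] [∀ i, Nonempty (V i)] (G : ∀ i, SimpleGraph (V i)) :
    linCl (sigmaGraph G) = Finset.univ.sup (fun i => linCl (G i)) := by
  classical
  have hGne : ∀ i, {p | HasClosedLineModel (G i) p}.Nonempty :=
    fun i => ⟨_, hasClosedLineModel_card (G i)⟩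
  have hSne : {p | HasClosedLineModel (sigmaGraph G) p}.Nonempty :=
    ⟨_, hasClosedLineModel_card (sigmaGraph G)⟩
  apply le_antisymm
  · apply Nat.sInf_le
    apply hasModel_sigma
    intro i
    exact hasClosedLineModel_mono (G i) (linCl_pos (G i))
      (Finset.le_sup (f := fun i => linCl (G i)) (Finset.mem_univ i)) (Nat.sInf_mem (hGne i))
  · apply Finset.sup_le
    intro i _
    exact Nat.sInf_le (hasModel_component G i (Nat.sInf_mem hSne))
end
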